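/- Let L = Σ_{k=0}^{K} |k⟩⟨k| ⊗ I − Σ_{k=1}^{K} |k⟩⟨k−1| ⊗ M_k be a block lower bidiagonal matrix where each block M_k satisfies ‖M_k‖ ≤ 1. Then ‖L‖ ≤ 3 and ‖L⁻¹‖ ≤ K + 1, so the condition number κ(L) ≤ 3(K+1). -/

import Mathlib

open scoped Matrix.Norms.L2Operator
open scoped Matrix

/-- Bound the L2 operator norm of a matrix by a bound on `mulVec`. -/
lemma aux_l2_opNorm_le_bound {m n : Type*} [Fintype m] [Fintype n] [DecidableEq n]
    (A : Matrix m n ℂ) {c : ℝ} (hc : 0 ≤ c)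
    (h : ∀ x : EuclideanSpace ℂ n,
      ‖(WithLp.equiv 2 (m → ℂ)).symm (A *ᵥ (WithLp.equiv 2 (n → ℂ)) x)‖ ≤ c * ‖x‖) :
    ‖A‖ ≤ c := by
  rw [Matrix.l2_opNorm_def]
  exact ContinuousLinearMap.opNorm_le_bound _ hc fun x => h x

/-- Squared-sum form of the `mulVec` bound for a matrix of norm at most one. -/
lemma aux_sq_sum_mulVec_le {d : ℕ} (A : Matrix (Fin d) (Fin d) ℂ) (hA : ‖A‖ ≤ 1)
    (y : Fin d → ℂ) : ∑ a, ‖(A *ᵥ y) a‖ ^ 2 ≤ ∑ b, ‖y b‖ ^ 2 := by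
  have h := Matrix.l2_opNorm_mulVec A ((WithLp.equiv 2 (Fin d → ℂ)).symm y)
  have hy : ‖(WithLp.equiv 2 (Fin d → ℂ)).symm y‖ = Real.sqrt (∑ b, ‖y b‖ ^ 2) := by
    rw [EuclideanSpace.norm_eq]
    rfl
  have hAy : ‖(EuclideanSpace.equiv (Fin d) ℂ).symm
      (A *ᵥ (WithLp.equiv 2 (Fin d → ℂ)).symm y)‖ =
      Real.sqrt (∑ a, ‖(A *ᵥ y) a‖ ^ 2) := by
    rw [EuclideanSpace.norm_eq]
    rfl
  rw [hAy, hy] at h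
  have h2 : Real.sqrt (∑ a, ‖(A *ᵥ y) a‖ ^ 2) ≤ Real.sqrt (∑ b, ‖y b‖ ^ 2) := by
    calc Real.sqrt (∑ a, ‖(A *ᵥ y) a‖ ^ 2) ≤ ‖A‖ * Real.sqrt (∑ b, ‖y b‖ ^ 2) := h
    _ ≤ 1 * Real.sqrt (∑ b, ‖y b‖ ^ 2) := by
        exact mul_le_mul_of_nonneg_right hA (Real.sqrt_nonneg _)
    _ = Real.sqrt (∑ b, ‖y b‖ ^ 2) := one_mul _
  have h3 : (0:ℝ) ≤ ∑ b, ‖y b‖ ^ 2 :=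
    Finset.sum_nonneg fun b _ => pow_nonneg (norm_nonneg _) 2
  exact (Real.sqrt_le_sqrt_iff h3).mp h2

/-- Let `L = Σ_{k=0}^{K} |k⟩⟨k| ⊗ I − Σ_{k=1}^{K} |k⟩⟨k−1| ⊗ M_k` be block lower
bidiagonal with `d×d` blocks, where each `M_k` has spectral norm at most `1`. Then
`L` is invertible, `‖L‖ ≤ 3`, `‖L⁻¹‖ ≤ K + 1`, and so `κ(L) = ‖L‖‖L⁻¹‖ ≤ 3(K+1)`. -/
theorem block_bidiagonal_condition_number (K d : ℕ) (hK : 1 ≤ K) (hd : 1 ≤ d)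
    (M : ℕ → Matrix (Fin d) (Fin d) ℂ) (hM : ∀ k, ‖M k‖ ≤ 1) :
    let L : Matrix (Fin (K + 1) × Fin d) (Fin (K + 1) × Fin d) ℂ :=
      Matrix.of fun p q =>
        if p.1 = q.1 then (if p.2 = q.2 then 1 else 0)
        else if (p.1 : ℕ) = (q.1 : ℕ) + 1 then -(M (p.1 : ℕ)) p.2 q.2
        else 0
    IsUnit L ∧ ‖L‖ ≤ 3 ∧ ‖L⁻¹‖ ≤ (K : ℝ) + 1 ∧
      ‖L‖ * ‖L⁻¹‖ ≤ 3 * ((K : ℝ) + 1) := by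
  intro L
  haveI : Nonempty (Fin d) := ⟨⟨0, hd⟩⟩
  classical
  -- The nilpotent part
  set N : Matrix (Fin (K + 1) × Fin d) (Fin (K + 1) × Fin d) ℂ :=
    Matrix.of (fun p q =>
      if (p.1 : ℕ) = (q.1 : ℕ) + 1 then (M (p.1 : ℕ)) p.2 q.2 else 0) with hN
  -- L = 1 - N
  have hLN : L = 1 - N := by
    ext p q
    simp only [L, N, Matrix.of_apply, Matrix.sub_apply, Matrix.one_apply, Prod.ext_iff]
    by_cases h1 : p.1 = q.1
    · have h2 : ¬ ((p.1 : ℕ) = (q.1 : ℕ) + 1) := by rw [h1]; omega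
      simp [h1, h2]
    · have h2 : ¬ (p.1 = q.1 ∧ p.2 = q.2) := fun h => h1 h.1
      rw [if_neg h1, if_neg h2, zero_sub]
      split <;> simp
  -- Entries of N^m vanish away from the m-th subdiagonal
  have hpow : ∀ m : ℕ, ∀ p q : Fin (K + 1) × Fin d,
      (q.1 : ℕ) + m ≠ (p.1 : ℕ) → (N ^ m) p q = 0 := by
    intro m
    induction m with
    | zero =>
      intro p q hpq
      have : p ≠ q := by
        intro h; rw [h] at hpq; omega
      simp [Matrix.one_apply, this]
    | succ m ih =>
      intro p q hpq
      rw [pow_succ']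
      rw [Matrix.mul_apply]
      apply Finset.sum_eq_zero
      intro r _
      by_cases h1 : (p.1 : ℕ) = (r.1 : ℕ) + 1
      · have : (q.1 : ℕ) + m ≠ (r.1 : ℕ) := by omega
        rw [ih r q this, mul_zero]
      · simp only [N, Matrix.of_apply, if_neg h1, zero_mul]
  have hNpow : N ^ (K + 1) = 0 := by
    ext p q
    rw [hpow (K + 1) p q (by have := p.1.isLt; have := q.1.isLt; omega)]
    simp
  -- The inverse as a geometric sum
  set S : Matrix (Fin (K + 1) × Fin d) (Fin (K + 1) × Fin d) ℂ :=
    ∑ j ∈ Finset.range (K + 1), N ^ j with hS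
  have hLS : L * S = 1 := by
    rw [hLN]
    have h1 : (N - 1) * S = N ^ (K + 1) - 1 := mul_geom_sum N (K + 1)
    have h2 : (1 - N) * S = -((N - 1) * S) := by noncomm_ring
    rw [h2, h1, hNpow]
    simp
  have hSL : S * L = 1 := by
    rw [hLN]
    have h1 : S * (N - 1) = N ^ (K + 1) - 1 := geom_sum_mul N (K + 1)
    have h2 : S * (1 - N) = -(S * (N - 1)) := by noncomm_ring
    rw [h2, h1, hNpow]
    simp
  have hUnit : IsUnit L := (Matrix.isUnit_iff_isUnit_det L).mpr (Matrix.isUnit_det_of_right_inverse hLS)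
  have hLinv : L⁻¹ = S := Matrix.inv_eq_right_inv hLS
  -- Norm of N is at most 1
  have hNnorm : ‖N‖ ≤ 1 := by
    apply aux_l2_opNorm_le_bound N zero_le_one
    intro x
    rw [one_mul]
    -- row formula
    have hrow : ∀ (i' : Fin K) (a : Fin d),
        (N *ᵥ (WithLp.equiv 2 (Fin (K + 1) × Fin d → ℂ)) x) (i'.succ, a) =
          ((M (i'.succ : ℕ)) *ᵥ fun b => x (i'.castSucc, b)) a := by
      intro i' a
      simp only [Matrix.mulVec, dotProduct, N, Matrix.of_apply]
      rw [Fintype.sum_prod_type]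
      rw [Finset.sum_eq_single i'.castSucc]
      · simp [Matrix.mulVec, dotProduct]
      · intro j _ hj
        have hval : ¬ ((i' : ℕ) = (j : ℕ)) := by
          intro h
          apply hj
          apply Fin.ext
          simp only [Fin.coe_castSucc]
          omega
        simp [Fin.val_succ, hval]
      · intro h
        exact absurd (Finset.mem_univ _) h
    have hrow0 : ∀ a : Fin d,
        (N *ᵥ (WithLp.equiv 2 (Fin (K + 1) × Fin d → ℂ)) x) ((0 : Fin (K + 1)), a) = 0 := by
      intro a
      simp only [Matrix.mulVec, dotProduct, N, Matrix.of_apply]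
      apply Finset.sum_eq_zero
      intro q _
      have : ¬ (((0 : Fin (K + 1)) : ℕ) = (q.1 : ℕ) + 1) := by simp
      simp [this]
    rw [EuclideanSpace.norm_eq, EuclideanSpace.norm_eq]
    apply Real.sqrt_le_sqrt
    calc ∑ p : Fin (K + 1) × Fin d,
          ‖(WithLp.equiv 2 (Fin (K + 1) × Fin d → ℂ)).symm
            (N *ᵥ (WithLp.equiv 2 (Fin (K + 1) × Fin d → ℂ)) x) p‖ ^ 2
        = ∑ i : Fin (K + 1), ∑ a : Fin d,
            ‖(N *ᵥ (WithLp.equiv 2 (Fin (K + 1) × Fin d → ℂ)) x) (i, a)‖ ^ 2 := by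
          rw [Fintype.sum_prod_type]
          rfl
      _ = ∑ a : Fin d,
            ‖(N *ᵥ (WithLp.equiv 2 (Fin (K + 1) × Fin d → ℂ)) x) ((0 : Fin (K + 1)), a)‖ ^ 2
          + ∑ i' : Fin K, ∑ a : Fin d,
            ‖(N *ᵥ (WithLp.equiv 2 (Fin (K + 1) × Fin d → ℂ)) x) (i'.succ, a)‖ ^ 2 :=
          Fin.sum_univ_succ _
      _ = ∑ i' : Fin K, ∑ a : Fin d,
            ‖((M (i'.succ : ℕ)) *ᵥ fun b => x (i'.castSucc, b)) a‖ ^ 2 := by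
          simp only [hrow0, hrow]
          simp
      _ ≤ ∑ i' : Fin K, ∑ b : Fin d, ‖x (i'.castSucc, b)‖ ^ 2 := by
          apply Finset.sum_le_sum
          intro i' _
          exact aux_sq_sum_mulVec_le _ (hM _) _
      _ ≤ ∑ i : Fin (K + 1), ∑ b : Fin d, ‖x (i, b)‖ ^ 2 := by
          have : ∑ i' : Fin K, ∑ b : Fin d, ‖x (i'.castSucc, b)‖ ^ 2 =
              ∑ i ∈ Finset.univ.map Fin.castSuccEmb, ∑ b : Fin d, ‖x (i, b)‖ ^ 2 := by
            rw [Finset.sum_map]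
            rfl
          rw [this]
          apply Finset.sum_le_sum_of_subset_of_nonneg (Finset.subset_univ _)
          intro i _ _
          exact Finset.sum_nonneg fun b _ => pow_nonneg (norm_nonneg _) 2
      _ = ∑ p : Fin (K + 1) × Fin d, ‖x p‖ ^ 2 := by
          rw [Fintype.sum_prod_type]
  -- Norm of the identity
  have hone : ‖(1 : Matrix (Fin (K + 1) × Fin d) (Fin (K + 1) × Fin d) ℂ)‖ = 1 :=
    CStarRing.norm_one
  -- Norm of L
  have hLnorm : ‖L‖ ≤ 3 := by
    rw [hLN]
    calc ‖(1 : Matrix (Fin (K + 1) × Fin d) (Fin (K + 1) × Fin d) ℂ) - N‖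
        ≤ ‖(1 : Matrix (Fin (K + 1) × Fin d) (Fin (K + 1) × Fin d) ℂ)‖ + ‖N‖ := norm_sub_le _ _
      _ ≤ 1 + 1 := by rw [hone]; linarith
      _ ≤ 3 := by norm_num
  -- Norm of the inverse
  have hSnorm : ‖S‖ ≤ (K : ℝ) + 1 := by
    rw [hS]
    calc ‖∑ j ∈ Finset.range (K + 1), N ^ j‖
        ≤ ∑ j ∈ Finset.range (K + 1), ‖N ^ j‖ := norm_sum_le _ _
      _ ≤ ∑ j ∈ Finset.range (K + 1), 1 := by
          apply Finset.sum_le_sum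
          intro j _
          rcases Nat.eq_zero_or_pos j with hj | hj
          · subst hj; simp [hone]
          · calc ‖N ^ j‖ ≤ ‖N‖ ^ j := norm_pow_le' N hj
              _ ≤ 1 ^ j := pow_le_pow_left₀ (norm_nonneg _) hNnorm j
              _ = 1 := one_pow j
      _ = (K : ℝ) + 1 := by simp
  refine ⟨hUnit, hLnorm, ?_, ?_⟩
  · rw [hLinv]; exact hSnorm
  · rw [hLinv]
    exact mul_le_mul hLnorm hSnorm (norm_nonneg _) (by norm_num)
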